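/- arXiv:1606.01577 — 5 statements merged into one kernel-verified Lean document; each statement's English description precedes it below -/
import Mathlib

section
/- For a finite weighted graph, any vertex $x$ with $\sum_{w\neq x} c_{xw}>0$, and any $f:V\to\mathbb{R}$: $\sum_{y\neq x} c_{xy}[f(x)-f(y)]^2 \geq \sum_{\{y,z\}\subseteq V\setminus\{x\}} c^{*,x}_{yz}[f(y)-f(z)]^2$, where $c^{*,x}_{yz} = c_{yx}c_{xz}/\sum_{w\neq x} c_{xw}$. Moreover, equality holds if and only if $\sum_{y\neq x} c_{xy}[f(y)-f(x)]=0$. -/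
open Finset

noncomputable section

theorem star_reduction_inequality {V : Type*} [Fintype V] [DecidableEq V]
    (c : V → V → ℝ) (hnn : ∀ z w, 0 ≤ c z w) (hsymm : ∀ z w, c z w = c w z)
    (hdiag : ∀ z, c z z = 0) (x : V)
    (hx : 0 < ∑ w ∈ univ.erase x, c x w) (f : V → ℝ) :
    (1 / 2) * ∑ y ∈ univ.erase x, ∑ z ∈ univ.erase x,
        (c y x * c x z / ∑ w ∈ univ.erase x, c x w) * (f y - f z) ^ 2
      ≤ ∑ y ∈ univ.erase x, c x y * (f x - f y) ^ 2
    ∧ (∑ y ∈ univ.erase x, c x y * (f x - f y) ^ 2 =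
        (1 / 2) * ∑ y ∈ univ.erase x, ∑ z ∈ univ.erase x,
          (c y x * c x z / ∑ w ∈ univ.erase x, c x w) * (f y - f z) ^ 2
        ↔ ∑ y ∈ univ.erase x, c x y * (f y - f x) = 0) := by
  set E := univ.erase x with hE
  set S := ∑ w ∈ E, c x w with hS
  set T := ∑ y ∈ E, c x y * (f y - f x) with hT
  set Q := ∑ y ∈ E, c x y * (f x - f y) ^ 2 with hQ
  have hS0 : S ≠ 0 := ne_of_gt hx
  have hD : ∑ y ∈ E, ∑ z ∈ E, c x y * c x z * (f y - f z) ^ 2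
      = 2 * S * Q - 2 * T ^ 2 := by
    have inner : ∀ y ∈ E, ∑ z ∈ E, c x y * c x z * (f y - f z) ^ 2
        = S * (c x y * (f x - f y) ^ 2) + c x y * Q
          - (2 * (c x y * (f y - f x))) * T := by
      intro y _
      rw [hQ, hT, hS]
      simp only [Finset.mul_sum, Finset.sum_mul]
      rw [← Finset.sum_add_distrib, ← Finset.sum_sub_distrib]
      exact Finset.sum_congr rfl fun z _ => by ring
    rw [Finset.sum_congr rfl inner, Finset.sum_sub_distrib, Finset.sum_add_distrib]
    simp only [← Finset.mul_sum, ← Finset.sum_mul]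
    rw [← hQ, ← hS, ← hT]
    ring
  have hDS : ∑ y ∈ E, ∑ z ∈ E, (c y x * c x z / S) * (f y - f z) ^ 2
      = 2 * Q - 2 * T ^ 2 / S := by
    have hpt : ∀ y z : V, (c y x * c x z / S) * (f y - f z) ^ 2
        = c x y * c x z * (f y - f z) ^ 2 / S := fun y z => by
      rw [hsymm y x]; ring
    simp_rw [hpt, ← Finset.sum_div, hD]
    field_simp
  have hkey : (1 / 2) * ∑ y ∈ E, ∑ z ∈ E, (c y x * c x z / S) * (f y - f z) ^ 2
      = Q - T ^ 2 / S := by rw [hDS]; ring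
  have hT2 : 0 ≤ T ^ 2 / S := div_nonneg (sq_nonneg T) (le_of_lt hx)
  constructor
  · rw [hkey]; linarith
  · rw [hkey]
    constructor
    · intro h
      have h0 : T ^ 2 / S = 0 := by linarith
      field_simp at h0
      simpa using h0
    · intro h
      rw [h]
      norm_num
end
end

section
/- The Dirichlet energy of the random walk is monotone decreasing under star network reduction: for any $f:V\to\mathbb{R}$ and vertex $x$ with positive total conductance, $\sum_{\{z,w\}\subseteq V} c_{zw}[f(z)-f(w)]^2 \geq \sum_{\{y,z\}\subseteq V\setminus\{x\}} \tilde{c}_{yz}[f(y)-f(z)]^2$, where $\tilde{c}_{yz} = c_{yz} + c_{yx}c_{xz}/\sum_{w\neq x} c_{xw}$. -/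
open Finset

noncomputable section

theorem elEnergy_mono_reduction {V : Type*} [Fintype V] [DecidableEq V]
    (c : V → V → ℝ) (hnn : ∀ z w, 0 ≤ c z w) (hsymm : ∀ z w, c z w = c w z)
    (hdiag : ∀ z, c z z = 0) (x : V)
    (hx : 0 < ∑ w ∈ univ.erase x, c x w) (f : V → ℝ) :
    (1 / 2) * ∑ z, ∑ w, c z w * (f z - f w) ^ 2 ≥
      (1 / 2) * ∑ y ∈ univ.erase x, ∑ z ∈ univ.erase x,
        (c y z + c y x * c x z / ∑ w ∈ univ.erase x, c x w) * (f y - f z) ^ 2 := by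
  set E := univ.erase x with hE
  set S := ∑ w ∈ E, c x w with hS
  set g : V → ℝ := fun y => f y - f x with hg
  set T := ∑ y ∈ E, c x y * (g y) ^ 2 with hT
  set U := ∑ y ∈ E, c x y * g y with hU
  have hS0 : S ≠ 0 := ne_of_gt hx
  -- key identity : ∑∑ c y x * c x z * (f y - f z)^2 = 2*S*T - 2*U^2
  have key : ∑ y ∈ E, ∑ z ∈ E, c y x * c x z * (f y - f z) ^ 2
      = 2 * S * T - 2 * U ^ 2 := by
    have inner : ∀ y ∈ E, ∑ z ∈ E, c y x * c x z * (f y - f z) ^ 2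
        = c x y * (g y) ^ 2 * S + c x y * T - 2 * (c x y * g y) * U := by
      intro y _
      have h1 : ∑ z ∈ E, c y x * c x z * (f y - f z) ^ 2
          = ∑ z ∈ E, (c x y * (g y) ^ 2 * c x z + c x y * (c x z * (g z) ^ 2)
              - 2 * (c x y * g y) * (c x z * g z)) := by
        refine Finset.sum_congr rfl fun z _ => ?_
        have hfz : f y - f z = g y - g z := by simp [hg]
        rw [hfz, hsymm y x]; ring
      rw [h1, Finset.sum_sub_distrib, Finset.sum_add_distrib, ← Finset.mul_sum,
        ← Finset.mul_sum, ← Finset.mul_sum]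
    rw [Finset.sum_congr rfl inner, Finset.sum_sub_distrib, Finset.sum_add_distrib]
    have e1 : ∑ y ∈ E, c x y * (g y) ^ 2 * S = T * S := by
      rw [← Finset.sum_mul]
    have e2 : ∑ y ∈ E, c x y * T = S * T := by
      rw [← Finset.sum_mul]
    have e3 : ∑ y ∈ E, 2 * (c x y * g y) * U = 2 * U * U := by
      rw [← Finset.sum_mul, ← Finset.mul_sum]
    rw [e1, e2, e3]; ring
  -- reduce to the inner inequality
  rw [ge_iff_le]
  have hmain : ∑ y ∈ E, ∑ z ∈ E, (c y z + c y x * c x z / S) * (f y - f z) ^ 2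
      ≤ ∑ z, ∑ w, c z w * (f z - f w) ^ 2 := by
    have split : ∀ (h : V → ℝ), ∑ z, h z = (∑ z ∈ E, h z) + h x := fun h =>
      (Finset.sum_erase_add univ h (mem_univ x)).symm
    rw [split (fun z => ∑ w, c z w * (f z - f w) ^ 2)]
    have hinner : ∀ z, ∑ w, c z w * (f z - f w) ^ 2
        = (∑ w ∈ E, c z w * (f z - f w) ^ 2) + c z x * (f z - f x) ^ 2 := fun z =>
      (Finset.sum_erase_add univ _ (mem_univ x)).symm
    simp only [hinner]
    rw [Finset.sum_add_distrib]
    have hLHS : ∑ y ∈ E, ∑ z ∈ E, (c y z + c y x * c x z / S) * (f y - f z) ^ 2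
        = (∑ y ∈ E, ∑ z ∈ E, c y z * (f y - f z) ^ 2)
          + (∑ y ∈ E, ∑ z ∈ E, c y x * c x z * (f y - f z) ^ 2) / S := by
      rw [Finset.sum_div]
      rw [← Finset.sum_add_distrib]
      refine Finset.sum_congr rfl fun y _ => ?_
      rw [Finset.sum_div, ← Finset.sum_add_distrib]
      refine Finset.sum_congr rfl fun z _ => ?_
      field_simp
    rw [hLHS, key]
    have hA : ∑ z ∈ E, c z x * (f z - f x) ^ 2 = T := by
      refine Finset.sum_congr rfl fun z _ => ?_
      rw [hsymm z x]
    have hB : ∑ w ∈ E, c x w * (f x - f w) ^ 2 = T := by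
      refine Finset.sum_congr rfl fun w _ => ?_
      simp only [hg]
      ring
    rw [hdiag x, hA, hB]
    have : (2 * S * T - 2 * U ^ 2) / S ≤ T + T := by
      rw [div_le_iff₀ hx]
      nlinarith [sq_nonneg U]
    nlinarith [this]
  have h2 : (0:ℝ) ≤ 1/2 := by norm_num
  exact mul_le_mul_of_nonneg_left hmain h2
end
end

section
/- Effective conductance is invariant under star network reduction: for a finite connected weighted graph $(V,c)$ with $|V|\geq 3$, vertices $x\neq y$, and any third vertex $v\notin\{x,y\}$ with $\sum_{w\neq v}c_{vw}>0$, the effective conductance between $x$ and $y$ in $(V,c)$ equals the effective conductance between $x$ and $y$ in the reduced graph $(V\setminus\{v\},\tilde{c})$, where $\tilde{c}_{yz}=c_{yz}+c_{yv}c_{vz}/\sum_{w\neq v}c_{vw}$. -/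
open Finset

noncomputable section

def elEnergy {V : Type*} [Fintype V] (c : V → V → ℝ) (h : V → ℝ) : ℝ :=
  (1 / 2) * ∑ z, ∑ w, c z w * (h z - h w) ^ 2

/-- Effective conductance between `x` and `y` on the weighted graph `(V, c)`. -/
def ceff {V : Type*} [Fintype V] (c : V → V → ℝ) (x y : V) : ℝ :=
  sInf {E : ℝ | ∃ h : V → ℝ, h x = 1 ∧ h y = 0 ∧ elEnergy c h = E}

set_option linter.unusedSectionVars false

section Aux

variable {V : Type*} [Fintype V] [DecidableEq V]

lemma elEnergy_nonneg (c : V → V → ℝ) (hnn : ∀ z w, 0 ≤ c z w) (h : V → ℝ) :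
    0 ≤ elEnergy c h := by
  unfold elEnergy
  have : (0:ℝ) ≤ ∑ z, ∑ w, c z w * (h z - h w) ^ 2 :=
    Finset.sum_nonneg fun z _ => Finset.sum_nonneg fun w _ =>
      mul_nonneg (hnn z w) (sq_nonneg _)
  linarith

lemma quad_zero (A S : ℝ) (hA : A ≠ 0) :
    A * (S / A) ^ 2 - 2 * (S / A) * S + S ^ 2 / A = 0 := by
  field_simp
  ring

lemma quad_nonneg (A S t : ℝ) (hA : 0 < A) :
    0 ≤ A * t ^ 2 - 2 * t * S + S ^ 2 / A := by
  have h : A * t ^ 2 - 2 * t * S + S ^ 2 / A = (A * t - S) ^ 2 / A := by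
    field_simp
    ring
  rw [h]
  positivity

/-- Expansion of a weighted sum of squares. -/
lemma sum_sq_expand (s : Finset V) (a h : V → ℝ) (t : ℝ) :
    ∑ w ∈ s, a w * (t - h w) ^ 2 =
      (∑ w ∈ s, a w) * t ^ 2 - 2 * t * (∑ w ∈ s, a w * h w)
        + ∑ w ∈ s, a w * h w ^ 2 := by
  rw [Finset.sum_mul, Finset.mul_sum, ← Finset.sum_sub_distrib, ← Finset.sum_add_distrib]
  exact Finset.sum_congr rfl fun w _ => by ring

/-- The weighted double-sum-of-squares identity. -/
lemma double_sum_sq (s : Finset V) (a h : V → ℝ) :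
    ∑ z ∈ s, ∑ w ∈ s, a z * a w * (h z - h w) ^ 2 =
      2 * (∑ w ∈ s, a w) * (∑ w ∈ s, a w * h w ^ 2)
        - 2 * (∑ w ∈ s, a w * h w) ^ 2 := by
  have key : ∀ z ∈ s, ∑ w ∈ s, a z * a w * (h z - h w) ^ 2 =
      (a z * h z ^ 2) * (∑ w ∈ s, a w)
        - (a z * h z) * (2 * (∑ w ∈ s, a w * h w))
        + a z * (∑ w ∈ s, a w * h w ^ 2) := by
    intro z _
    rw [Finset.mul_sum, Finset.mul_sum, Finset.mul_sum, Finset.mul_sum,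
      ← Finset.sum_sub_distrib, ← Finset.sum_add_distrib]
    exact Finset.sum_congr rfl fun w _ => by ring
  rw [Finset.sum_congr rfl key]
  rw [Finset.sum_add_distrib, Finset.sum_sub_distrib, ← Finset.sum_mul, ← Finset.sum_mul,
    ← Finset.sum_mul]
  ring

end Aux

section Star

variable {V : Type*} [Fintype V] [DecidableEq V]
variable (c : V → V → ℝ) (v : V)

/-- Extension of a function on `V \ {v}` to `V`, with value `t` at `v`. -/
def extFun (h' : {w : V // w ≠ v} → ℝ) (t : ℝ) : V → ℝ :=
  fun z => if hz : z = v then t else h' ⟨z, hz⟩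

lemma extFun_v (h' : {w : V // w ≠ v} → ℝ) (t : ℝ) : extFun v h' t v = t := by
  simp [extFun]

lemma extFun_ne (h' : {w : V // w ≠ v} → ℝ) (t : ℝ) (w : V) (hw : w ≠ v) :
    extFun v h' t w = h' ⟨w, hw⟩ := by
  simp [extFun, hw]

/-- Splitting the energy according to the star at `v`. -/
lemma elEnergy_split (hsymm : ∀ z w, c z w = c w z) (hdiag : c v v = 0) (h : V → ℝ) :
    elEnergy c h =
      (1 / 2) * ∑ z ∈ univ.erase v, ∑ w ∈ univ.erase v, c z w * (h z - h w) ^ 2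
        + ∑ w ∈ univ.erase v, c v w * (h v - h w) ^ 2 := by
  unfold elEnergy
  rw [← Finset.add_sum_erase univ (fun z => ∑ w, c z w * (h z - h w) ^ 2) (mem_univ v)]
  rw [← Finset.add_sum_erase univ (fun w => c v w * (h v - h w) ^ 2) (mem_univ v)]
  have hinner : ∀ z ∈ univ.erase v, (∑ w, c z w * (h z - h w) ^ 2) =
      c z v * (h z - h v) ^ 2 + ∑ w ∈ univ.erase v, c z w * (h z - h w) ^ 2 :=
    fun z _ => (Finset.add_sum_erase univ (fun w => c z w * (h z - h w) ^ 2)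
      (mem_univ v)).symm
  rw [Finset.sum_congr rfl hinner, Finset.sum_add_distrib]
  have hmid : ∑ z ∈ univ.erase v, c z v * (h z - h v) ^ 2 =
      ∑ w ∈ univ.erase v, c v w * (h v - h w) ^ 2 :=
    Finset.sum_congr rfl fun z _ => by rw [hsymm z v]; ring
  rw [hmid, hdiag]
  ring

/-- The key identity: the energy of the extension equals the reduced energy plus
a quadratic penalty in the value at `v`. -/
lemma master (hsymm : ∀ z w, c z w = c w z) (hdiag : c v v = 0)
    (hA : (∑ w ∈ univ.erase v, c v w) ≠ 0)
    (h' : {w : V // w ≠ v} → ℝ) (t : ℝ) :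
    elEnergy c (extFun v h' t) =
      elEnergy (fun a b : {w : V // w ≠ v} =>
        c a.1 b.1 + c a.1 v * c v b.1 / ∑ w ∈ univ.erase v, c v w) h'
      + ((∑ w ∈ univ.erase v, c v w) * t ^ 2
          - 2 * t * (∑ b : {w : V // w ≠ v}, c v b.1 * h' b)
          + (∑ b : {w : V // w ≠ v}, c v b.1 * h' b) ^ 2
            / (∑ w ∈ univ.erase v, c v w)) := by
  classical
  set s : Finset V := univ.erase v with hs
  set A : ℝ := ∑ w ∈ s, c v w with hAdef
  set H : V → ℝ := extFun v h' t with hH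
  have hmem : ∀ z : V, z ∈ s ↔ z ≠ v := by intro z; simp [hs]
  have hH' : ∀ b : {w : V // w ≠ v}, h' b = H b.1 := fun b =>
    (extFun_ne v h' t b.1 b.2).symm
  -- rewrite the subtype sum as a sum over s
  have hS1 : (∑ b : {w : V // w ≠ v}, c v b.1 * h' b) = ∑ w ∈ s, c v w * H w := by
    rw [Finset.sum_subtype s hmem (fun w => c v w * H w)]
    exact Finset.sum_congr rfl fun b _ => by rw [hH' b]
  -- reduced energy in terms of sums over s
  have hred : elEnergy (fun a b : {w : V // w ≠ v} =>
      c a.1 b.1 + c a.1 v * c v b.1 / A) h' =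
      (1 / 2) * ∑ z ∈ s, ∑ w ∈ s, c z w * (H z - H w) ^ 2
        + (1 / (2 * A)) * ∑ z ∈ s, ∑ w ∈ s, c v z * c v w * (H z - H w) ^ 2 := by
    have step2 : ∑ z ∈ s, ∑ w ∈ s, ((c z w + c z v * c v w / A) * (H z - H w) ^ 2)
        = ∑ b : {w : V // w ≠ v}, ∑ b' : {w : V // w ≠ v},
            (c b.1 b'.1 + c b.1 v * c v b'.1 / A) * (H b.1 - H b'.1) ^ 2 := by
      rw [Finset.sum_subtype s hmem
        (fun z => ∑ w ∈ s, (c z w + c z v * c v w / A) * (H z - H w) ^ 2)]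
      exact Finset.sum_congr rfl fun b _ =>
        Finset.sum_subtype s hmem
          (fun w => (c b.1 w + c b.1 v * c v w / A) * (H b.1 - H w) ^ 2)
    unfold elEnergy
    simp only [hH']
    rw [← step2]
    rw [Finset.mul_sum, Finset.mul_sum, Finset.mul_sum, ← Finset.sum_add_distrib]
    refine Finset.sum_congr rfl fun z hz => ?_
    rw [Finset.mul_sum, Finset.mul_sum, Finset.mul_sum, ← Finset.sum_add_distrib]
    refine Finset.sum_congr rfl fun w hw => ?_
    rw [hsymm z v]
    field_simp
  have hsplit := elEnergy_split c v hsymm hdiag H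
  rw [← hs] at hsplit
  have hT : ∑ w ∈ s, c v w * (H v - H w) ^ 2 =
      A * t ^ 2 - 2 * t * (∑ w ∈ s, c v w * H w) + ∑ w ∈ s, c v w * H w ^ 2 := by
    rw [hH, extFun_v]
    exact sum_sq_expand s (c v) (extFun v h' t) t
  have hDD : ∑ z ∈ s, ∑ w ∈ s, c v z * c v w * (H z - H w) ^ 2 =
      2 * A * (∑ w ∈ s, c v w * H w ^ 2) - 2 * (∑ w ∈ s, c v w * H w) ^ 2 :=
    double_sum_sq s (c v) H
  rw [hsplit, hred, hS1, hT, hDD]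
  field_simp
  ring

lemma master_nonneg (hsymm : ∀ z w, c z w = c w z) (hdiag : c v v = 0)
    (hA : 0 < ∑ w ∈ univ.erase v, c v w)
    (h' : {w : V // w ≠ v} → ℝ) (t : ℝ) :
    elEnergy (fun a b : {w : V // w ≠ v} =>
        c a.1 b.1 + c a.1 v * c v b.1 / ∑ w ∈ univ.erase v, c v w) h'
      ≤ elEnergy c (extFun v h' t) := by
  rw [master c v hsymm hdiag hA.ne' h' t]
  have := quad_nonneg (∑ w ∈ univ.erase v, c v w)
    (∑ b : {w : V // w ≠ v}, c v b.1 * h' b) t hA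
  linarith

end Star

theorem ceff_invariant_star_reduction {V : Type*} [Fintype V] [DecidableEq V]
    (hcard : 3 ≤ Fintype.card V)
    (c : V → V → ℝ) (hnn : ∀ z w, 0 ≤ c z w) (hsymm : ∀ z w, c z w = c w z)
    (hdiag : ∀ z, c z z = 0)
    (hconn : (SimpleGraph.fromRel fun z w => 0 < c z w).Connected)
    (x y v : V) (hxy : x ≠ y) (hxv : x ≠ v) (hyv : y ≠ v)
    (hv : 0 < ∑ w ∈ univ.erase v, c v w) :
    ceff c x y =
      ceff (fun a b : {w : V // w ≠ v} =>
          c a.1 b.1 + c a.1 v * c v b.1 / ∑ w ∈ univ.erase v, c v w)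
        ⟨x, hxv⟩ ⟨y, hyv⟩ := by
  classical
  have hctnn : ∀ a b : {w : V // w ≠ v},
      0 ≤ c a.1 b.1 + c a.1 v * c v b.1 / ∑ w ∈ univ.erase v, c v w :=
    fun a b => add_nonneg (hnn _ _)
      (div_nonneg (mul_nonneg (hnn _ _) (hnn _ _)) hv.le)
  have hyx : (⟨y, hyv⟩ : {w : V // w ≠ v}) ≠ ⟨x, hxv⟩ :=
    fun hq => (Ne.symm hxy) (congrArg Subtype.val hq)
  have hSbdd : BddBelow {E : ℝ | ∃ h : V → ℝ,
      h x = 1 ∧ h y = 0 ∧ elEnergy c h = E} := by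
    refine ⟨0, fun E hE => ?_⟩
    obtain ⟨h, _, _, hEq⟩ := hE
    rw [← hEq]; exact elEnergy_nonneg c hnn h
  have hTbdd : BddBelow {E : ℝ | ∃ h : {w : V // w ≠ v} → ℝ,
      h ⟨x, hxv⟩ = 1 ∧ h ⟨y, hyv⟩ = 0 ∧
      elEnergy (fun a b : {w : V // w ≠ v} =>
        c a.1 b.1 + c a.1 v * c v b.1 / ∑ w ∈ univ.erase v, c v w) h = E} := by
    refine ⟨0, fun E hE => ?_⟩
    obtain ⟨h, _, _, hEq⟩ := hE
    rw [← hEq]; exact elEnergy_nonneg _ hctnn h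
  have hSne : Set.Nonempty {E : ℝ | ∃ h : V → ℝ,
      h x = 1 ∧ h y = 0 ∧ elEnergy c h = E} :=
    ⟨_, (fun z => if z = x then 1 else 0), by simp, by simp [hxy.symm], rfl⟩
  have hTne : Set.Nonempty {E : ℝ | ∃ h : {w : V // w ≠ v} → ℝ,
      h ⟨x, hxv⟩ = 1 ∧ h ⟨y, hyv⟩ = 0 ∧
      elEnergy (fun a b : {w : V // w ≠ v} =>
        c a.1 b.1 + c a.1 v * c v b.1 / ∑ w ∈ univ.erase v, c v w) h = E} :=
    ⟨_, (fun b => if b = ⟨x, hxv⟩ then 1 else 0), by simp, by simp [hyx], rfl⟩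
  unfold ceff
  apply le_antisymm
  · refine le_csInf hTne ?_
    rintro E ⟨h', hx', hy', hEq⟩
    set t : ℝ := (∑ b : {w : V // w ≠ v}, c v b.1 * h' b)
        / (∑ w ∈ univ.erase v, c v w) with ht
    have hzero : (∑ w ∈ univ.erase v, c v w) * t ^ 2
        - 2 * t * (∑ b : {w : V // w ≠ v}, c v b.1 * h' b)
        + (∑ b : {w : V // w ≠ v}, c v b.1 * h' b) ^ 2
          / (∑ w ∈ univ.erase v, c v w) = 0 := by
      rw [ht]
      exact quad_zero _ _ hv.ne'
    have hkey : elEnergy c (extFun v h' t) = E := by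
      rw [← hEq, master c v hsymm (hdiag v) hv.ne' h' t, hzero, add_zero]
    exact csInf_le hSbdd ⟨extFun v h' t,
      by rw [extFun_ne v h' t x hxv]; exact hx',
      by rw [extFun_ne v h' t y hyv]; exact hy', hkey⟩
  · refine le_csInf hSne ?_
    rintro E ⟨h, hx', hy', hEq⟩
    have hext : extFun v (fun b => h b.1) (h v) = h := by
      funext z
      by_cases hz : z = v
      · rw [hz]; exact extFun_v v _ (h v)
      · exact extFun_ne v _ (h v) z hz
    have hle := master_nonneg c v hsymm (hdiag v) hv (fun b => h b.1) (h v)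
    rw [hext] at hle
    exact le_trans (csInf_le hTbdd ⟨(fun b => h b.1), hx', hy', rfl⟩) (hEq ▸ hle)
end
end

section
/- Monotonicity of the interchange-process Dirichlet energy under network reduction: assuming the octopus inequality, for any $f:S_V\to\mathbb{R}$ and vertex $x$ with $c_x>0$, $\frac12\sum_{\{z,w\}\subseteq V} c_{zw}\,\nu[(\nabla_{zw}f)^2] \geq \frac12\sum_{\{y,z\}\subseteq V\setminus\{x\}} \tilde{c}_{yz}\,\nu[(\nabla_{yz}f)^2]$, where $\nabla_{ab}f(\eta)=f(\eta\tau_{ab})-f(\eta)$ and $\tilde{c}_{yz}=c_{yz}+c_{yx}c_{xz}/c_x$. -/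
open Finset

noncomputable section

def permExp {V : Type*} [Fintype V] [DecidableEq V] (g : Equiv.Perm V → ℝ) : ℝ :=
  (∑ η : Equiv.Perm V, g η) / (Fintype.card (Equiv.Perm V))

theorem ipEnergy_mono_reduction {V : Type*} [Fintype V] [DecidableEq V]
    (c : V → V → ℝ) (hnn : ∀ z w, 0 ≤ c z w) (hsymm : ∀ z w, c z w = c w z)
    (hdiag : ∀ z, c z z = 0) (x : V)
    (hx : 0 < ∑ w ∈ univ.erase x, c x w)
    (f : Equiv.Perm V → ℝ)
    (octopus : ∑ y ∈ univ.erase x, c x y *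
        permExp (fun η => (f (η * Equiv.swap x y) - f η) ^ 2) ≥
      (1 / 2) * ∑ y ∈ univ.erase x, ∑ z ∈ univ.erase x,
        (c y x * c x z / ∑ w ∈ univ.erase x, c x w) *
          permExp (fun η => (f (η * Equiv.swap y z) - f η) ^ 2)) :
    (1 / 2) * ((1 / 2) * ∑ z, ∑ w, c z w *
        permExp (fun η => (f (η * Equiv.swap z w) - f η) ^ 2)) ≥
      (1 / 2) * ((1 / 2) * ∑ y ∈ univ.erase x, ∑ z ∈ univ.erase x,
        (c y z + c y x * c x z / ∑ w ∈ univ.erase x, c x w) *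
          permExp (fun η => (f (η * Equiv.swap y z) - f η) ^ 2)) := by
  set E : V → V → ℝ := fun a b => permExp (fun η => (f (η * Equiv.swap a b) - f η) ^ 2) with hE
  have hEsymm : ∀ a b, E a b = E b a := by
    intro a b; simp only [hE, Equiv.swap_comm]
  have split : ∑ z, ∑ w, c z w * E z w
      = (∑ y ∈ univ.erase x, ∑ z ∈ univ.erase x, c y z * E y z)
        + 2 * ∑ y ∈ univ.erase x, c x y * E x y := by
    rw [← Finset.sum_erase_add univ _ (mem_univ x)]
    have hrow : ∑ w, c x w * E x w = ∑ w ∈ univ.erase x, c x w * E x w := by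
      rw [← Finset.sum_erase_add univ _ (mem_univ x), hdiag x]
      ring
    have hcol : ∀ z ∈ univ.erase x, ∑ w, c z w * E z w
        = (∑ w ∈ univ.erase x, c z w * E z w) + c x z * E x z := by
      intro z _
      rw [← Finset.sum_erase_add univ _ (mem_univ x), hsymm z x, hEsymm z x]
    rw [Finset.sum_congr rfl hcol, Finset.sum_add_distrib, hrow]
    ring
  have rsplit : ∑ y ∈ univ.erase x, ∑ z ∈ univ.erase x,
      (c y z + c y x * c x z / ∑ w ∈ univ.erase x, c x w) * E y z
      = (∑ y ∈ univ.erase x, ∑ z ∈ univ.erase x, c y z * E y z)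
        + ∑ y ∈ univ.erase x, ∑ z ∈ univ.erase x,
          (c y x * c x z / ∑ w ∈ univ.erase x, c x w) * E y z := by
    rw [← Finset.sum_add_distrib]
    congr 1; ext y
    rw [← Finset.sum_add_distrib]
    congr 1; ext z
    ring
  rw [split, rsplit]
  linarith
end
end

section
/- Lower bound on effective resistance via the exclusion Dirichlet form: on a finite connected weighted graph, for any $x\neq y$ and $\alpha\in(0,1)$, $R_{\mathrm{eff}}(x,y) \geq \sup\left\{ \frac{\nu_\alpha[(f(\zeta^{xy})-f(\zeta))^2]}{\sum_{\{z,w\}}c_{zw}\,\nu_\alpha[(f(\zeta^{zw})-f(\zeta))^2]} : f:\{0,1\}^V\to\mathbb{R},\ \nu_\alpha[(f(\zeta^{xy})-f(\zeta))^2]>0 \right\}$. -/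
open Finset

noncomputable section

def bweight {V : Type*} [Fintype V] (α : ℝ) (ζ : V → Bool) : ℝ :=
  ∏ x, if ζ x then α else 1 - α

def bexp {V : Type*} [Fintype V] [DecidableEq V] (α : ℝ) (g : (V → Bool) → ℝ) : ℝ :=
  ∑ ζ : V → Bool, bweight α ζ * g ζ

namespace ReffMPL
set_option linter.unusedSectionVars false

variable {V : Type*} [Fintype V] [DecidableEq V]

lemma bweight_nonneg {α : ℝ} (h0 : 0 ≤ α) (h1 : α ≤ 1) (ζ : V → Bool) :
    0 ≤ bweight α ζ :=
  Finset.prod_nonneg fun x _ => by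
    by_cases h : ζ x <;> simp [h] <;> linarith

lemma bweight_comp (α : ℝ) (σ : Equiv.Perm V) (ζ : V → Bool) :
    bweight α (ζ ∘ σ) = bweight α ζ :=
  Equiv.prod_comp σ (fun v => if ζ v then α else 1 - α)

def precompEquiv (σ : Equiv.Perm V) : (V → Bool) ≃ (V → Bool) where
  toFun ζ := ζ ∘ σ
  invFun ζ := ζ ∘ σ.symm
  left_inv ζ := by funext v; simp
  right_inv ζ := by funext v; simp

lemma sum_precomp (σ : Equiv.Perm V) (F : (V → Bool) → ℝ) :
    ∑ ζ : V → Bool, F (ζ ∘ σ) = ∑ ζ : V → Bool, F ζ :=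
  Equiv.sum_comp (precompEquiv σ) F

def sqd (α : ℝ) (f : (V → Bool) → ℝ) (a b : V) : ℝ :=
  bexp α (fun ζ => (f (ζ ∘ Equiv.swap a b) - f ζ) ^ 2)

def dd (α : ℝ) (f : (V → Bool) → ℝ) (a b : V) : ℝ :=
  Real.sqrt (sqd α f a b)

variable {α : ℝ} {f : (V → Bool) → ℝ}

lemma sqd_nonneg (h0 : 0 ≤ α) (h1 : α ≤ 1) (a b : V) : 0 ≤ sqd α f a b :=
  Finset.sum_nonneg fun ζ _ => mul_nonneg (bweight_nonneg h0 h1 ζ) (sq_nonneg _)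

lemma sqd_self (a : V) : sqd α f a a = 0 := by
  unfold sqd bexp
  apply Finset.sum_eq_zero
  intro ζ _
  have h : ζ ∘ ⇑(Equiv.swap a a) = ζ := by
    funext v; simp [Equiv.swap_self]
  show bweight α ζ * (f (ζ ∘ ⇑(Equiv.swap a a)) - f ζ) ^ 2 = 0
  rw [h]
  simp

lemma sqd_comm (a b : V) : sqd α f a b = sqd α f b a := by
  unfold sqd; rw [Equiv.swap_comm]

lemma dd_nonneg (a b : V) : 0 ≤ dd α f a b := Real.sqrt_nonneg _

lemma dd_comm (a b : V) : dd α f a b = dd α f b a := by unfold dd; rw [sqd_comm]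

lemma dd_self (a : V) : dd α f a a = 0 := by
  unfold dd; rw [sqd_self]; exact Real.sqrt_zero

lemma sq_dd (h0 : 0 ≤ α) (h1 : α ≤ 1) (a b : V) : dd α f a b ^ 2 = sqd α f a b :=
  Real.sq_sqrt (sqd_nonneg h0 h1 a b)

lemma weighted_minkowski {I : Type*} [Fintype I] (ν u v : I → ℝ) (hν : ∀ i, 0 ≤ ν i) :
    Real.sqrt (∑ i, ν i * (u i + v i) ^ 2) ≤
      Real.sqrt (∑ i, ν i * u i ^ 2) + Real.sqrt (∑ i, ν i * v i ^ 2) := by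
  have ha0 : 0 ≤ ∑ i, ν i * u i ^ 2 :=
    Finset.sum_nonneg fun i _ => mul_nonneg (hν i) (sq_nonneg _)
  have hb0 : 0 ≤ ∑ i, ν i * v i ^ 2 :=
    Finset.sum_nonneg fun i _ => mul_nonneg (hν i) (sq_nonneg _)
  set a := Real.sqrt (∑ i, ν i * u i ^ 2) with ha
  set b := Real.sqrt (∑ i, ν i * v i ^ 2) with hb
  have ha' : a ^ 2 = ∑ i, ν i * u i ^ 2 := Real.sq_sqrt ha0
  have hb' : b ^ 2 = ∑ i, ν i * v i ^ 2 := Real.sq_sqrt hb0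
  have hcs : ∑ i, (Real.sqrt (ν i) * u i) * (Real.sqrt (ν i) * v i) ≤ a * b := by
    have h := Real.sum_mul_le_sqrt_mul_sqrt (Finset.univ)
      (fun i => Real.sqrt (ν i) * u i) (fun i => Real.sqrt (ν i) * v i)
    have e1 : ∑ i, (Real.sqrt (ν i) * u i) ^ 2 = ∑ i, ν i * u i ^ 2 :=
      Finset.sum_congr rfl fun i _ => by rw [mul_pow, Real.sq_sqrt (hν i)]
    have e2 : ∑ i, (Real.sqrt (ν i) * v i) ^ 2 = ∑ i, ν i * v i ^ 2 :=
      Finset.sum_congr rfl fun i _ => by rw [mul_pow, Real.sq_sqrt (hν i)]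
    rwa [e1, e2, ← ha, ← hb] at h
  have key : ∑ i, ν i * (u i + v i) ^ 2 ≤ (a + b) ^ 2 := by
    have expand : ∀ i : I, ν i * (u i + v i) ^ 2 =
        ν i * u i ^ 2 + 2 * ((Real.sqrt (ν i) * u i) * (Real.sqrt (ν i) * v i))
          + ν i * v i ^ 2 := by
      intro i
      have h := Real.mul_self_sqrt (hν i)
      nlinarith [h]
    calc ∑ i, ν i * (u i + v i) ^ 2
        = (∑ i, ν i * u i ^ 2) +
            (∑ i, 2 * ((Real.sqrt (ν i) * u i) * (Real.sqrt (ν i) * v i))) +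
            (∑ i, ν i * v i ^ 2) := by
          rw [← Finset.sum_add_distrib, ← Finset.sum_add_distrib]
          exact Finset.sum_congr rfl fun i _ => expand i
      _ = (∑ i, ν i * u i ^ 2) +
            2 * (∑ i, (Real.sqrt (ν i) * u i) * (Real.sqrt (ν i) * v i)) +
            (∑ i, ν i * v i ^ 2) := by
          rw [Finset.mul_sum]
      _ ≤ a ^ 2 + 2 * (a * b) + b ^ 2 := by
          rw [ha', hb']; linarith [hcs]
      _ = (a + b) ^ 2 := by ring
  calc Real.sqrt (∑ i, ν i * (u i + v i) ^ 2) ≤ Real.sqrt ((a + b) ^ 2) :=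
        Real.sqrt_le_sqrt key
    _ = a + b := Real.sqrt_sq (add_nonneg (Real.sqrt_nonneg _) (Real.sqrt_nonneg _))

lemma dd_triangle (h0 : 0 ≤ α) (h1 : α ≤ 1) (x w z : V) :
    dd α f x z ≤ dd α f x w + dd α f w z := by
  by_cases hxz : x = z
  · subst hxz
    rw [dd_self]
    exact add_nonneg (dd_nonneg _ _) (dd_nonneg _ _)
  by_cases hxw : x = w
  · subst hxw
    rw [dd_self, zero_add]
  by_cases hwz : w = z
  · subst hwz
    rw [dd_self (a := w), add_zero]
  -- main case: x, w, z pairwise distinct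
  set T1 : (V → Bool) → ℝ := fun ζ =>
    if ζ w = ζ z then
      f ((ζ ∘ ⇑(Equiv.swap x w)) ∘ ⇑(Equiv.swap w z)) - f (ζ ∘ ⇑(Equiv.swap x w))
    else if ζ x = ζ w then f (ζ ∘ ⇑(Equiv.swap w z)) - f ζ
    else 0 with hT1
  set T2 : (V → Bool) → ℝ := fun ζ =>
    if ζ w = ζ z then f (ζ ∘ ⇑(Equiv.swap x w)) - f ζ
    else if ζ x = ζ w then
      f ((ζ ∘ ⇑(Equiv.swap w z)) ∘ ⇑(Equiv.swap x w)) - f (ζ ∘ ⇑(Equiv.swap w z))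
    else 0 with hT2
  have hdecomp : ∀ ζ : V → Bool, f (ζ ∘ ⇑(Equiv.swap x z)) - f ζ = T1 ζ + T2 ζ := by
    intro ζ
    by_cases hc1 : ζ w = ζ z
    · have hcomp : ζ ∘ ⇑(Equiv.swap x z) = (ζ ∘ ⇑(Equiv.swap x w)) ∘ ⇑(Equiv.swap w z) := by
        funext v
        show ζ (Equiv.swap x z v) = ζ (Equiv.swap x w (Equiv.swap w z v))
        by_cases hvx : v = x
        · subst hvx
          rw [Equiv.swap_apply_left, Equiv.swap_apply_of_ne_of_ne hxw hxz,
            Equiv.swap_apply_left]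
          exact hc1.symm
        · by_cases hvz : v = z
          · subst hvz
            rw [Equiv.swap_apply_right, Equiv.swap_apply_right, Equiv.swap_apply_right]
          · by_cases hvw : v = w
            · subst hvw
              rw [Equiv.swap_apply_of_ne_of_ne (Ne.symm hxw) hvz,
                Equiv.swap_apply_left, Equiv.swap_apply_of_ne_of_ne (Ne.symm hxz) (Ne.symm hwz)]
              exact hc1
            · rw [Equiv.swap_apply_of_ne_of_ne hvx hvz,
                Equiv.swap_apply_of_ne_of_ne hvw hvz,
                Equiv.swap_apply_of_ne_of_ne hvx hvw]
      simp only [hT1, hT2, if_pos hc1]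
      rw [hcomp]; ring
    · by_cases hc2 : ζ x = ζ w
      · have hcomp : ζ ∘ ⇑(Equiv.swap x z) = (ζ ∘ ⇑(Equiv.swap w z)) ∘ ⇑(Equiv.swap x w) := by
          funext v
          show ζ (Equiv.swap x z v) = ζ (Equiv.swap w z (Equiv.swap x w v))
          by_cases hvx : v = x
          · subst hvx
            rw [Equiv.swap_apply_left, Equiv.swap_apply_left, Equiv.swap_apply_left]
          · by_cases hvz : v = z
            · subst hvz
              rw [Equiv.swap_apply_right,
                Equiv.swap_apply_of_ne_of_ne (Ne.symm hxz) (Ne.symm hwz),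
                Equiv.swap_apply_right]
              exact hc2
            · by_cases hvw : v = w
              · subst hvw
                rw [Equiv.swap_apply_of_ne_of_ne (Ne.symm hxw) hvz,
                  Equiv.swap_apply_right, Equiv.swap_apply_of_ne_of_ne hxw hxz]
                exact hc2.symm
              · rw [Equiv.swap_apply_of_ne_of_ne hvx hvz,
                  Equiv.swap_apply_of_ne_of_ne hvx hvw,
                  Equiv.swap_apply_of_ne_of_ne hvw hvz]
        simp only [hT1, hT2, if_neg hc1, if_pos hc2]
        rw [hcomp]; ring
      · have hxz' : ζ x = ζ z := by
          cases hb1 : ζ x <;> cases hb2 : ζ w <;> cases hb3 : ζ z <;> simp_all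
        have hcomp : ζ ∘ ⇑(Equiv.swap x z) = ζ := by
          funext v
          show ζ (Equiv.swap x z v) = ζ v
          by_cases hvx : v = x
          · subst hvx; rw [Equiv.swap_apply_left]; exact hxz'.symm
          · by_cases hvz : v = z
            · subst hvz; rw [Equiv.swap_apply_right]; exact hxz'
            · rw [Equiv.swap_apply_of_ne_of_ne hvx hvz]
        simp only [hT1, hT2, if_neg hc1, if_neg hc2]
        rw [hcomp]; ring
  have hν : ∀ ζ : V → Bool, 0 ≤ bweight α ζ := bweight_nonneg h0 h1
  have hstart : dd α f x z
      = Real.sqrt (∑ ζ : V → Bool, bweight α ζ * (T1 ζ + T2 ζ) ^ 2) := by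
    unfold dd sqd bexp
    congr 1
    apply Finset.sum_congr rfl
    intro ζ _
    show bweight α ζ * (f (ζ ∘ ⇑(Equiv.swap x z)) - f ζ) ^ 2 = _
    rw [hdecomp ζ]
  -- bound for T2 (an xw-increment)
  have hb2 : ∑ ζ : V → Bool, bweight α ζ * T2 ζ ^ 2 ≤ sqd α f x w := by
    have hsplit : ∀ ζ : V → Bool, bweight α ζ * T2 ζ ^ 2 =
        (if ζ w = ζ z then
            bweight α ζ * (f (ζ ∘ ⇑(Equiv.swap x w)) - f ζ) ^ 2 else 0)
      + (if ¬ζ w = ζ z ∧ ζ x = ζ w then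
            bweight α ζ *
              (f ((ζ ∘ ⇑(Equiv.swap w z)) ∘ ⇑(Equiv.swap x w)) - f (ζ ∘ ⇑(Equiv.swap w z))) ^ 2
          else 0) := by
      intro ζ
      by_cases c1 : ζ w = ζ z
      · simp only [hT2, if_pos c1]
        rw [if_neg (by tauto), add_zero]
      · by_cases c2 : ζ x = ζ w
        · simp only [hT2, if_neg c1, if_pos c2]
          rw [if_pos ⟨c1, c2⟩, zero_add]
        · simp only [hT2, if_neg c1, if_neg c2]
          rw [if_neg (by tauto), add_zero]
          simp
    rw [Finset.sum_congr rfl fun ζ _ => hsplit ζ, Finset.sum_add_distrib]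
    have hre : (∑ ζ : V → Bool, if ¬ζ w = ζ z ∧ ζ x = ζ w then
            bweight α ζ *
              (f ((ζ ∘ ⇑(Equiv.swap w z)) ∘ ⇑(Equiv.swap x w)) - f (ζ ∘ ⇑(Equiv.swap w z))) ^ 2
          else 0)
        = ∑ ζ : V → Bool, (if ¬ζ z = ζ w ∧ ζ x = ζ z then
            bweight α ζ * (f (ζ ∘ ⇑(Equiv.swap x w)) - f ζ) ^ 2 else 0) := by
      calc (∑ ζ : V → Bool, if ¬ζ w = ζ z ∧ ζ x = ζ w then
            bweight α ζ *
              (f ((ζ ∘ ⇑(Equiv.swap w z)) ∘ ⇑(Equiv.swap x w)) - f (ζ ∘ ⇑(Equiv.swap w z))) ^ 2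
          else 0)
          = ∑ ζ : V → Bool, (fun η => if ¬η z = η w ∧ η x = η z then
              bweight α η * (f (η ∘ ⇑(Equiv.swap x w)) - f η) ^ 2 else 0)
              (ζ ∘ ⇑(Equiv.swap w z)) := by
            apply Finset.sum_congr rfl
            intro ζ _
            simp only [Function.comp_apply, Equiv.swap_apply_right, Equiv.swap_apply_left,
              Equiv.swap_apply_of_ne_of_ne hxw hxz, bweight_comp]
        _ = _ := sum_precomp (Equiv.swap w z) (fun η => if ¬η z = η w ∧ η x = η z then
              bweight α η * (f (η ∘ ⇑(Equiv.swap x w)) - f η) ^ 2 else 0)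
    rw [hre, ← Finset.sum_add_distrib]
    have hfin : ∀ ζ : V → Bool,
        ((if ζ w = ζ z then
            bweight α ζ * (f (ζ ∘ ⇑(Equiv.swap x w)) - f ζ) ^ 2 else 0)
        + (if ¬ζ z = ζ w ∧ ζ x = ζ z then
            bweight α ζ * (f (ζ ∘ ⇑(Equiv.swap x w)) - f ζ) ^ 2 else 0))
        ≤ bweight α ζ * (f (ζ ∘ ⇑(Equiv.swap x w)) - f ζ) ^ 2 := by
      intro ζ
      have hnn : 0 ≤ bweight α ζ * (f (ζ ∘ ⇑(Equiv.swap x w)) - f ζ) ^ 2 :=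
        mul_nonneg (hν ζ) (sq_nonneg _)
      by_cases hp : ζ w = ζ z
      · rw [if_pos hp, if_neg (by tauto)]
        simp
      · rw [if_neg hp, zero_add]
        by_cases hq : ¬ζ z = ζ w ∧ ζ x = ζ z
        · rw [if_pos hq]
        · rw [if_neg hq]; exact hnn
    calc ∑ ζ : V → Bool, _ ≤ ∑ ζ : V → Bool,
          bweight α ζ * (f (ζ ∘ ⇑(Equiv.swap x w)) - f ζ) ^ 2 :=
        Finset.sum_le_sum fun ζ _ => hfin ζ
      _ = sqd α f x w := rfl
  -- bound for T1 (a wz-increment)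
  have hb1 : ∑ ζ : V → Bool, bweight α ζ * T1 ζ ^ 2 ≤ sqd α f w z := by
    have hsplit : ∀ ζ : V → Bool, bweight α ζ * T1 ζ ^ 2 =
        (if ζ w = ζ z then
            bweight α ζ *
              (f ((ζ ∘ ⇑(Equiv.swap x w)) ∘ ⇑(Equiv.swap w z)) - f (ζ ∘ ⇑(Equiv.swap x w))) ^ 2
          else 0)
      + (if ¬ζ w = ζ z ∧ ζ x = ζ w then
            bweight α ζ * (f (ζ ∘ ⇑(Equiv.swap w z)) - f ζ) ^ 2 else 0) := by
      intro ζ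
      by_cases c1 : ζ w = ζ z
      · simp only [hT1, if_pos c1]
        rw [if_neg (by tauto), add_zero]
      · by_cases c2 : ζ x = ζ w
        · simp only [hT1, if_neg c1, if_pos c2]
          rw [if_pos ⟨c1, c2⟩, zero_add]
        · simp only [hT1, if_neg c1, if_neg c2]
          rw [if_neg (by tauto), add_zero]
          simp
    rw [Finset.sum_congr rfl fun ζ _ => hsplit ζ, Finset.sum_add_distrib]
    have hre : (∑ ζ : V → Bool, if ζ w = ζ z then
            bweight α ζ *
              (f ((ζ ∘ ⇑(Equiv.swap x w)) ∘ ⇑(Equiv.swap w z)) - f (ζ ∘ ⇑(Equiv.swap x w))) ^ 2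
          else 0)
        = ∑ ζ : V → Bool, (if ζ x = ζ z then
            bweight α ζ * (f (ζ ∘ ⇑(Equiv.swap w z)) - f ζ) ^ 2 else 0) := by
      calc (∑ ζ : V → Bool, if ζ w = ζ z then
            bweight α ζ *
              (f ((ζ ∘ ⇑(Equiv.swap x w)) ∘ ⇑(Equiv.swap w z)) - f (ζ ∘ ⇑(Equiv.swap x w))) ^ 2
          else 0)
          = ∑ ζ : V → Bool, (fun η => if η x = η z then
              bweight α η * (f (η ∘ ⇑(Equiv.swap w z)) - f η) ^ 2 else 0)
              (ζ ∘ ⇑(Equiv.swap x w)) := by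
            apply Finset.sum_congr rfl
            intro ζ _
            simp only [Function.comp_apply, Equiv.swap_apply_left,
              Equiv.swap_apply_of_ne_of_ne (Ne.symm hxz) (Ne.symm hwz), bweight_comp]
        _ = _ := sum_precomp (Equiv.swap x w) (fun η => if η x = η z then
              bweight α η * (f (η ∘ ⇑(Equiv.swap w z)) - f η) ^ 2 else 0)
    rw [hre, ← Finset.sum_add_distrib]
    have hfin : ∀ ζ : V → Bool,
        ((if ζ x = ζ z then
            bweight α ζ * (f (ζ ∘ ⇑(Equiv.swap w z)) - f ζ) ^ 2 else 0)
        + (if ¬ζ w = ζ z ∧ ζ x = ζ w then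
            bweight α ζ * (f (ζ ∘ ⇑(Equiv.swap w z)) - f ζ) ^ 2 else 0))
        ≤ bweight α ζ * (f (ζ ∘ ⇑(Equiv.swap w z)) - f ζ) ^ 2 := by
      intro ζ
      have hnn : 0 ≤ bweight α ζ * (f (ζ ∘ ⇑(Equiv.swap w z)) - f ζ) ^ 2 :=
        mul_nonneg (hν ζ) (sq_nonneg _)
      by_cases hp : ζ x = ζ z
      · rw [if_pos hp, if_neg (fun hc => hc.1 (hc.2.symm.trans hp))]
        simp
      · rw [if_neg hp, zero_add]
        by_cases hq : ¬ζ w = ζ z ∧ ζ x = ζ w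
        · rw [if_pos hq]
        · rw [if_neg hq]; exact hnn
    calc ∑ ζ : V → Bool, _ ≤ ∑ ζ : V → Bool,
          bweight α ζ * (f (ζ ∘ ⇑(Equiv.swap w z)) - f ζ) ^ 2 :=
        Finset.sum_le_sum fun ζ _ => hfin ζ
      _ = sqd α f w z := rfl
  rw [hstart]
  calc Real.sqrt (∑ ζ : V → Bool, bweight α ζ * (T1 ζ + T2 ζ) ^ 2)
      ≤ Real.sqrt (∑ ζ : V → Bool, bweight α ζ * T1 ζ ^ 2)
        + Real.sqrt (∑ ζ : V → Bool, bweight α ζ * T2 ζ ^ 2) :=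
        weighted_minkowski (fun ζ : V → Bool => bweight α ζ) T1 T2 hν
    _ ≤ Real.sqrt (sqd α f w z) + Real.sqrt (sqd α f x w) :=
        add_le_add (Real.sqrt_le_sqrt hb1) (Real.sqrt_le_sqrt hb2)
    _ = dd α f x w + dd α f w z := by unfold dd; ring

lemma elEnergy_nonneg {c : V → V → ℝ} (hnn : ∀ z w, 0 ≤ c z w) (h : V → ℝ) :
    0 ≤ elEnergy c h := by
  unfold elEnergy
  apply mul_nonneg (by norm_num)
  apply Finset.sum_nonneg; intro z _
  apply Finset.sum_nonneg; intro w _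
  exact mul_nonneg (hnn z w) (sq_nonneg _)

lemma pair_le_energy {c : V → V → ℝ} (hnn : ∀ z w, 0 ≤ c z w)
    (hsymm : ∀ z w, c z w = c w z) {v u : V} (hvu : v ≠ u) (h : V → ℝ) :
    c v u * (h v - h u) ^ 2 ≤ elEnergy c h := by
  have hrow : ∀ z : V, 0 ≤ ∑ w, c z w * (h z - h w) ^ 2 :=
    fun z => Finset.sum_nonneg fun w _ => mul_nonneg (hnn z w) (sq_nonneg _)
  have hv : c v u * (h v - h u) ^ 2 ≤ ∑ w, c v w * (h v - h w) ^ 2 :=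
    Finset.single_le_sum (f := fun w => c v w * (h v - h w) ^ 2)
      (fun w _ => mul_nonneg (hnn v w) (sq_nonneg _)) (Finset.mem_univ u)
  have hu : c u v * (h u - h v) ^ 2 ≤ ∑ w, c u w * (h u - h w) ^ 2 :=
    Finset.single_le_sum (f := fun w => c u w * (h u - h w) ^ 2)
      (fun w _ => mul_nonneg (hnn u w) (sq_nonneg _)) (Finset.mem_univ v)
  have hpair : (∑ w, c v w * (h v - h w) ^ 2) + (∑ w, c u w * (h u - h w) ^ 2)
      ≤ ∑ z, ∑ w, c z w * (h z - h w) ^ 2 := by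
    have hsub := Finset.sum_le_sum_of_subset_of_nonneg
      (Finset.subset_univ ({v, u} : Finset V))
      (fun z _ _ => hrow z)
    rwa [Finset.sum_pair hvu] at hsub
  have heq : c u v * (h u - h v) ^ 2 = c v u * (h v - h u) ^ 2 := by
    rw [← hsymm v u]; ring
  unfold elEnergy
  linarith [hv, hu, hpair]

lemma walk_bound {c : V → V → ℝ} (hnn : ∀ z w, 0 ≤ c z w)
    (hsymm : ∀ z w, c z w = c w z) :
    ∀ {v w : V}, (SimpleGraph.fromRel fun a b => 0 < c a b).Walk v w →
      ∃ K : ℝ, 0 < K ∧ ∀ h : V → ℝ, (h v - h w) ^ 2 ≤ K * elEnergy c h := by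
  intro v w p
  induction p with
  | nil =>
    exact ⟨1, one_pos, fun h => by simpa using elEnergy_nonneg hnn h⟩
  | @cons a b w' hadj p ih =>
    obtain ⟨K, hK, hKb⟩ := ih
    rw [SimpleGraph.fromRel_adj] at hadj
    obtain ⟨hne, hor⟩ := hadj
    have hc : 0 < c a b := by
      rcases hor with h' | h'
      · exact h'
      · rw [hsymm a b]; exact h'
    refine ⟨2 / c a b + 2 * K, by positivity, fun h => ?_⟩
    have h1 : (h a - h b) ^ 2 ≤ elEnergy c h / c a b := by
      rw [le_div_iff₀ hc]
      calc (h a - h b) ^ 2 * c a b = c a b * (h a - h b) ^ 2 := by ring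
        _ ≤ elEnergy c h := pair_le_energy hnn hsymm hne h
    have h2 : (h b - h w') ^ 2 ≤ K * elEnergy c h := hKb h
    have h4 : (2 / c a b + 2 * K) * elEnergy c h
        = 2 * (elEnergy c h / c a b) + 2 * (K * elEnergy c h) := by
      field_simp
    rw [h4]
    nlinarith [sq_nonneg ((h a - h b) - (h b - h w'))]

lemma ceff_bddBelow (c : V → V → ℝ) (hnn : ∀ z w, 0 ≤ c z w) (x y : V) :
    BddBelow {E : ℝ | ∃ h : V → ℝ, h x = 1 ∧ h y = 0 ∧ elEnergy c h = E} := by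
  refine ⟨0, ?_⟩
  rintro E ⟨h, _, _, rfl⟩
  exact elEnergy_nonneg hnn h

lemma ceff_pos {c : V → V → ℝ} (hnn : ∀ z w, 0 ≤ c z w)
    (hsymm : ∀ z w, c z w = c w z)
    (hconn : (SimpleGraph.fromRel fun z w => 0 < c z w).Connected)
    {x y : V} (hxy : x ≠ y) : 0 < ceff c x y := by
  obtain ⟨p⟩ := hconn.preconnected x y
  obtain ⟨K, hK, hKb⟩ := walk_bound hnn hsymm p
  have hne0 : {E : ℝ | ∃ h : V → ℝ, h x = 1 ∧ h y = 0 ∧ elEnergy c h = E}.Nonempty := by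
    refine ⟨elEnergy c (fun v => if v = x then 1 else 0),
      fun v => if v = x then 1 else 0, ?_, ?_, rfl⟩
    · simp
    · simp [hxy.symm]
  have hlb : ∀ E ∈ {E : ℝ | ∃ h : V → ℝ, h x = 1 ∧ h y = 0 ∧ elEnergy c h = E}, K⁻¹ ≤ E := by
    rintro E ⟨h, hx1, hy0, rfl⟩
    have h1 : (1 : ℝ) ≤ K * elEnergy c h := by
      have h2 := hKb h
      rwa [hx1, hy0, sub_zero, one_pow] at h2
    rw [inv_eq_one_div, div_le_iff₀ hK]
    linarith [mul_comm K (elEnergy c h)]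
  exact lt_of_lt_of_le (inv_pos.mpr hK) (le_csInf hne0 hlb)

end ReffMPL

theorem reff_lower_bound_exclusion {V : Type*} [Fintype V] [DecidableEq V]
    (c : V → V → ℝ) (hnn : ∀ z w, 0 ≤ c z w) (hsymm : ∀ z w, c z w = c w z)
    (hdiag : ∀ z, c z z = 0)
    (hconn : (SimpleGraph.fromRel fun z w => 0 < c z w).Connected)
    (α : ℝ) (hα0 : 0 < α) (hα1 : α < 1) (x y : V) (hxy : x ≠ y) :
    (ceff c x y)⁻¹ ≥
      sSup {r : ℝ | ∃ f : (V → Bool) → ℝ,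
        0 < bexp α (fun ζ => (f (ζ ∘ Equiv.swap x y) - f ζ) ^ 2) ∧
        r = bexp α (fun ζ => (f (ζ ∘ Equiv.swap x y) - f ζ) ^ 2) /
          ((1 / 2) * ∑ z, ∑ w, c z w *
            bexp α (fun ζ => (f (ζ ∘ Equiv.swap z w) - f ζ) ^ 2))} := by
  classical
  have hα0' : (0 : ℝ) ≤ α := le_of_lt hα0
  have hα1' : α ≤ 1 := le_of_lt hα1
  have hceff : 0 < ceff c x y := ReffMPL.ceff_pos hnn hsymm hconn hxy
  rw [ge_iff_le]
  apply Real.sSup_le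
  · rintro r ⟨f, hN, rfl⟩
    have hNsq : bexp α (fun ζ => (f (ζ ∘ Equiv.swap x y) - f ζ) ^ 2)
        = ReffMPL.sqd α f x y := rfl
    set N := ReffMPL.sqd α f x y with hNdef
    rw [hNsq] at hN
    have hNpos : 0 < N := hN
    set dxy := Real.sqrt N with hdxy
    have hdxy0 : 0 < dxy := Real.sqrt_pos.mpr hNpos
    set h : V → ℝ := fun v => max (1 - ReffMPL.dd α f x v / dxy) 0 with hh
    have hhx : h x = 1 := by
      rw [hh]
      simp [ReffMPL.dd_self]
    have hhy : h y = 0 := by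
      rw [hh]
      have hexy : ReffMPL.dd α f x y = dxy := rfl
      simp [hexy, div_self (ne_of_gt hdxy0)]
    have hLip : ∀ z w : V, (h z - h w) ^ 2 * N ≤ ReffMPL.sqd α f z w := by
      intro z w
      have htri1 : ReffMPL.dd α f x z - ReffMPL.dd α f x w ≤ ReffMPL.dd α f z w := by
        have ht := ReffMPL.dd_triangle (f := f) hα0' hα1' x w z
        have hc := ReffMPL.dd_comm (α := α) (f := f) w z
        linarith
      have htri2 : ReffMPL.dd α f x w - ReffMPL.dd α f x z ≤ ReffMPL.dd α f z w := by
        have ht := ReffMPL.dd_triangle (f := f) hα0' hα1' x z w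
        linarith
      have habs2 : |ReffMPL.dd α f x w - ReffMPL.dd α f x z| ≤ ReffMPL.dd α f z w :=
        abs_sub_le_iff.mpr ⟨htri2, htri1⟩
      have habs : |h z - h w| ≤ ReffMPL.dd α f z w / dxy := by
        rw [hh]
        have hmax : |max (1 - ReffMPL.dd α f x z / dxy) 0
              - max (1 - ReffMPL.dd α f x w / dxy) 0|
            ≤ |(1 - ReffMPL.dd α f x z / dxy) - (1 - ReffMPL.dd α f x w / dxy)| :=
          abs_max_sub_max_le_abs _ _ _
        have heq : (1 - ReffMPL.dd α f x z / dxy) - (1 - ReffMPL.dd α f x w / dxy)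
            = (ReffMPL.dd α f x w - ReffMPL.dd α f x z) / dxy := by ring
        calc |max (1 - ReffMPL.dd α f x z / dxy) 0 - max (1 - ReffMPL.dd α f x w / dxy) 0|
            ≤ |(1 - ReffMPL.dd α f x z / dxy) - (1 - ReffMPL.dd α f x w / dxy)| := hmax
          _ = |ReffMPL.dd α f x w - ReffMPL.dd α f x z| / dxy := by
              rw [heq, abs_div, abs_of_pos hdxy0]
          _ ≤ ReffMPL.dd α f z w / dxy := by
              exact div_le_div_of_nonneg_right habs2 hdxy0.le
      have h2 : (h z - h w) ^ 2 ≤ (ReffMPL.dd α f z w / dxy) ^ 2 := by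
        calc (h z - h w) ^ 2 = |h z - h w| ^ 2 := (sq_abs _).symm
          _ ≤ (ReffMPL.dd α f z w / dxy) ^ 2 :=
            pow_le_pow_left₀ (abs_nonneg _) habs 2
      have h3 : (ReffMPL.dd α f z w / dxy) ^ 2 = ReffMPL.sqd α f z w / N := by
        rw [div_pow, ReffMPL.sq_dd hα0' hα1', hdxy, Real.sq_sqrt (le_of_lt hNpos)]
      exact (le_div_iff₀ hNpos).mp (h2.trans_eq h3)
    set D := (1 / 2) * ∑ z, ∑ w, c z w *
        bexp α (fun ζ => (f (ζ ∘ Equiv.swap z w) - f ζ) ^ 2) with hDdef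
    have hEh : elEnergy c h * N ≤ D := by
      have step1 : elEnergy c h * N = (1 / 2) * ∑ z, ∑ w, c z w * ((h z - h w) ^ 2 * N) := by
        unfold elEnergy
        rw [mul_assoc, Finset.sum_mul]
        congr 1
        apply Finset.sum_congr rfl
        intro z _
        rw [Finset.sum_mul]
        apply Finset.sum_congr rfl
        intro w _
        ring
      rw [step1, hDdef]
      refine mul_le_mul_of_nonneg_left ?_ (by norm_num)
      apply Finset.sum_le_sum
      intro z _
      apply Finset.sum_le_sum
      intro w _
      exact mul_le_mul_of_nonneg_left (hLip z w) (hnn z w)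
    have hmem : elEnergy c h ∈
        {E : ℝ | ∃ h' : V → ℝ, h' x = 1 ∧ h' y = 0 ∧ elEnergy c h' = E} :=
      ⟨h, hhx, hhy, rfl⟩
    have hkey : ceff c x y * N ≤ D :=
      le_trans (mul_le_mul_of_nonneg_right
        (csInf_le (ReffMPL.ceff_bddBelow c hnn x y) hmem) (le_of_lt hNpos)) hEh
    have hD : 0 < D := lt_of_lt_of_le (mul_pos hceff hNpos) hkey
    rw [hNsq, div_le_iff₀ hD]
    calc N = (ceff c x y)⁻¹ * (ceff c x y * N) := by
          field_simp
      _ ≤ (ceff c x y)⁻¹ * D :=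
          mul_le_mul_of_nonneg_left hkey (inv_nonneg.mpr (le_of_lt hceff))
  · exact inv_nonneg.mpr (le_of_lt hceff)
end
end
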